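/- Let P_Z and Q_Z be probability vectors on a finite alphabet A_Z, X a random variable related to Z via a memoryless channel with invertible matrix Π and true marginal P_Z. Let X̂_B^{Q}(z) = X̂_B(Π(·,z) ⊙ (Π^{-T} Q_Z)) be the mismatched Bayes filter. Then E[Λ(X, X̂_B^{Q_Z}(Z))] − E[Λ(X, X̂_B^{P_Z}(Z))] ≤ Λ_max · |Π^{-T}|_max · |A_X| · ‖P_Z − Q_Z‖₁. -/

import Mathlib

open Finset Matrix

noncomputable section

/-- Maximal absolute entry of a matrix. -/
def matMaxAbs {α : Type} [Fintype α] [Nonempty α] (M : Matrix α α ℝ) : ℝ :=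
  ⨆ p : α × α, |M p.1 p.2|

/-- The mismatched Bayes filter `X̂_B^{q}(z) = X̂_B(K(·,z) ⊙ (K^{-T} q))`. -/
def hadFilter {α : Type} [Fintype α] [DecidableEq α]
    (K : Matrix α α ℝ) (XB : (α → ℝ) → α) (q : α → ℝ) (zt : α) : α :=
  XB (fun a => K a zt * Matrix.mulVec (K⁻¹)ᵀ q a)

/-- Let `pZ, qZ` be probability vectors, `X` related to `Z` via a
memoryless channel with invertible `K` and true marginal `pZ` (so
`P_X = K^{-T} pZ` and `P(X = x, Z = z) = P_X(x) K(x,z)`). Then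
`E[Λ(X, X̂_B^{qZ}(Z))] − E[Λ(X, X̂_B^{pZ}(Z))] ≤ Λmax |K^{-T}|_max |A_X| ‖pZ − qZ‖₁`. -/
theorem mismatched_filter_single_letter_bound
    {α : Type} [Fintype α] [DecidableEq α] [Nonempty α]
    (K : Matrix α α ℝ) (hK0 : ∀ a b, 0 ≤ K a b) (hKrow : ∀ a, ∑ b, K a b = 1)
    (hKdet : IsUnit K.det)
    (pZ : α → ℝ) (hpZ0 : ∀ z, 0 ≤ pZ z) (hpZ1 : ∑ z, pZ z = 1)
    (qZ : α → ℝ) (hqZ0 : ∀ z, 0 ≤ qZ z) (hqZ1 : ∑ z, qZ z = 1)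
    (Λ : α → α → ℝ) (Λmax : ℝ)
    (hΛ0 : ∀ i j, 0 ≤ Λ i j) (hΛmax : ∀ i j, Λ i j ≤ Λmax)
    (XB : (α → ℝ) → α)
    (hXB : ∀ v : α → ℝ, ∀ j : α, ∑ i, Λ i (XB v) * v i ≤ ∑ i, Λ i j * v i) :
    ∑ x : α, ∑ z : α, (Matrix.mulVec (K⁻¹)ᵀ pZ x * K x z) *
        (Λ x (hadFilter K XB qZ z) - Λ x (hadFilter K XB pZ z))
      ≤ Λmax * matMaxAbs (K⁻¹)ᵀ * (Fintype.card α : ℝ) * ∑ z, |pZ z - qZ z| := by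
  classical
  set M := (K⁻¹)ᵀ with hMdef
  obtain ⟨a0⟩ := ‹Nonempty α›
  have hΛmax0 : 0 ≤ Λmax := le_trans (hΛ0 a0 a0) (hΛmax a0 a0)
  have hMbd : ∀ a b, |M a b| ≤ matMaxAbs M := by
    intro a b
    have : |M a b| ≤ ⨆ p : α × α, |M p.1 p.2| :=
      le_ciSup (f := fun p : α × α => |M p.1 p.2|)
        (Set.Finite.bddAbove (Set.finite_range _)) (a, b)
    exact this
  have hMnn : 0 ≤ matMaxAbs M := le_trans (abs_nonneg _) (hMbd a0 a0)
  set D : α → ℝ := fun x => Matrix.mulVec M pZ x - Matrix.mulVec M qZ x with hD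
  have key : ∀ z, ∑ x, (Matrix.mulVec M pZ x * K x z) *
      (Λ x (hadFilter K XB qZ z) - Λ x (hadFilter K XB pZ z))
      ≤ Λmax * ∑ x, K x z * |D x| := by
    intro z
    set jq := hadFilter K XB qZ z with hjq
    set jp := hadFilter K XB pZ z with hjp
    have hopt : ∑ x, (Λ x jq - Λ x jp) * (K x z * Matrix.mulVec M qZ x) ≤ 0 := by
      have h := hXB (fun a => K a z * Matrix.mulVec M qZ a) jp
      have : ∑ x, Λ x jq * (K x z * Matrix.mulVec M qZ x)
          ≤ ∑ x, Λ x jp * (K x z * Matrix.mulVec M qZ x) := by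
        simpa [hjq, hadFilter] using h
      simpa [sub_mul, Finset.sum_sub_distrib] using sub_nonpos.mpr this
    have hsplit : ∀ x, (Matrix.mulVec M pZ x * K x z) * (Λ x jq - Λ x jp)
        = (Λ x jq - Λ x jp) * (K x z * Matrix.mulVec M qZ x)
          + (Λ x jq - Λ x jp) * (K x z * D x) := by
      intro x; simp only [hD]; ring
    calc ∑ x, (Matrix.mulVec M pZ x * K x z) * (Λ x jq - Λ x jp)
        = ∑ x, (Λ x jq - Λ x jp) * (K x z * Matrix.mulVec M qZ x)
          + ∑ x, (Λ x jq - Λ x jp) * (K x z * D x) := by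
          rw [← Finset.sum_add_distrib]; exact Finset.sum_congr rfl fun x _ => hsplit x
      _ ≤ 0 + ∑ x, (Λ x jq - Λ x jp) * (K x z * D x) := by
          exact add_le_add_left hopt _
      _ ≤ ∑ x, Λmax * (K x z * |D x|) := by
          rw [zero_add]
          apply Finset.sum_le_sum
          intro x _
          calc (Λ x jq - Λ x jp) * (K x z * D x)
              ≤ |(Λ x jq - Λ x jp) * (K x z * D x)| := le_abs_self _
            _ = |Λ x jq - Λ x jp| * (K x z * |D x|) := by
                rw [abs_mul, abs_mul, abs_of_nonneg (hK0 x z)]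
            _ ≤ Λmax * (K x z * |D x|) := by
                apply mul_le_mul_of_nonneg_right
                · exact abs_sub_le_of_nonneg_of_le (hΛ0 x jq) (hΛmax x jq)
                    (hΛ0 x jp) (hΛmax x jp)
                · exact mul_nonneg (hK0 x z) (abs_nonneg _)
      _ = Λmax * ∑ x, K x z * |D x| := by rw [Finset.mul_sum]
  have hDbd : ∀ x, |D x| ≤ matMaxAbs M * ∑ z, |pZ z - qZ z| := by
    intro x
    have hDx : D x = ∑ z, M x z * (pZ z - qZ z) := by
      simp [hD, Matrix.mulVec, dotProduct, mul_sub, Finset.sum_sub_distrib]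
    rw [hDx]
    calc |∑ z, M x z * (pZ z - qZ z)| ≤ ∑ z, |M x z * (pZ z - qZ z)| :=
          Finset.abs_sum_le_sum_abs _ _
      _ = ∑ z, |M x z| * |pZ z - qZ z| := by simp [abs_mul]
      _ ≤ ∑ z, matMaxAbs M * |pZ z - qZ z| :=
          Finset.sum_le_sum fun z _ =>
            mul_le_mul_of_nonneg_right (hMbd x z) (abs_nonneg _)
      _ = matMaxAbs M * ∑ z, |pZ z - qZ z| := by rw [Finset.mul_sum]
  calc ∑ x : α, ∑ z : α, (Matrix.mulVec M pZ x * K x z) *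
        (Λ x (hadFilter K XB qZ z) - Λ x (hadFilter K XB pZ z))
      = ∑ z : α, ∑ x : α, (Matrix.mulVec M pZ x * K x z) *
        (Λ x (hadFilter K XB qZ z) - Λ x (hadFilter K XB pZ z)) := Finset.sum_comm
    _ ≤ ∑ z : α, Λmax * ∑ x, K x z * |D x| := Finset.sum_le_sum fun z _ => key z
    _ = Λmax * ∑ x, |D x| := by
        rw [← Finset.mul_sum, Finset.sum_comm]
        congr 1
        refine Finset.sum_congr rfl fun x _ => ?_
        rw [← Finset.sum_mul, hKrow x, one_mul]
    _ ≤ Λmax * ∑ x : α, matMaxAbs M * ∑ z, |pZ z - qZ z| := by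
        exact mul_le_mul_of_nonneg_left (Finset.sum_le_sum fun x _ => hDbd x) hΛmax0
    _ = Λmax * matMaxAbs M * (Fintype.card α : ℝ) * ∑ z, |pZ z - qZ z| := by
        rw [Finset.sum_const, nsmul_eq_mul, Finset.card_univ]; ring
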